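/- Let 𝒟 be a measurable space, P a probability measure on 𝒟, B a normed vector space equipped with a measurable-space structure making the norm of differences of f-values measurable, and f : 𝒟^n → B. Let ℛ be a measurable space, ε > 0, δ ∈ [0,1], γ ∈ (0,1), ρ ∈ (0, min{γ, 1/2}). Let m ∈ ℕ satisfy m ≥ log(1/ρ)/(2(γ−ρ)²) and let k ∈ ℕ satisfy k ≤ m and k ≥ m·(1 − γ + ρ + √(log(1/ρ)/(2m))). Let M : [0,∞) → B → (probability measures on ℛ) be sensitivity-induced (ε,δ)-differentially private, i.e., for every Δ ≥ 0 and every x, x' ∈ B with ‖x − x'‖ ≤ Δ, and every measurable R ⊆ ℛ, M(Δ)(x)(R) ≤ e^ε · M(Δ)(x')(R) + δ. For w ∈ 𝒟^{n+1} set g(w) = ‖f(w_1,…,w_n) − f(w_1,…,w_{n−1},w_{n+1})‖, and for a sample s = (s¹,…,sᵐ) ∈ (𝒟^{n+1})^m let Δ̂(s) be the k-th smallest value among g(s¹),…,g(sᵐ). Then, with w ~ P^{⊗(n+1)} and s ~ (P^{⊗(n+1)})^{⊗m} independent, the probability of the (assumed measurable) event { (w,s) : for every measurable R ⊆ ℛ,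 M(Δ̂(s))(f(w_1,…,w_n))(R) ≤ e^ε · M(Δ̂(s))(f(w_1,…,w_{n−1},w_{n+1}))(R) + δ } is at least 1 − γ. -/

import Mathlib

open MeasureTheory Real
open scoped ENNReal

/-- The `k`-th smallest element (i.e. the `k`-th order statistic, `k ≥ 1`) of a list of reals. -/
noncomputable def kthSmallest (l : List ℝ) (k : ℕ) : ℝ :=
  ((Multiset.ofList l).sort (· ≤ ·)).getD (k - 1) 0


section Aux
open Real Finset
/-- Hoeffding's lemma for a Bernoulli(p) variable. -/
lemma bernoulli_mgf_le {p : ℝ} (hp0 : 0 ≤ p) (hp1 : p ≤ 1) (y : ℝ) :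
    1 - p + p * Real.exp y ≤ Real.exp (y * p + y ^ 2 / 8) := by
  have hu : ∀ x : ℝ, 0 < 1 - p + p * Real.exp x := by
    intro x
    rcases lt_or_eq_of_le hp1 with h | h
    · have := mul_nonneg hp0 (Real.exp_pos x).le; linarith
    · subst h; simpa using Real.exp_pos x
  set u : ℝ → ℝ := fun x => 1 - p + p * Real.exp x with hu_def
  have hu' : ∀ x, HasDerivAt u (p * Real.exp x) x := by
    intro x
    exact ((Real.hasDerivAt_exp x).const_mul p).const_add (1 - p)
  set G : ℝ → ℝ := fun x => p + x / 4 - p * Real.exp x / u x with hG_def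
  set F : ℝ → ℝ := fun x => x * p + x ^ 2 / 8 - Real.log (u x) with hF_def
  have hF' : ∀ x, HasDerivAt F (G x) x := by
    intro x
    have h1 : HasDerivAt (fun x : ℝ => x * p) p x := by
      simpa using (hasDerivAt_id x).mul_const p
    have h2 : HasDerivAt (fun x : ℝ => x ^ 2 / 8) (x / 4) x := by
      have h := (hasDerivAt_pow 2 x).div_const 8
      refine h.congr_deriv ?_; ring
    have h3 : HasDerivAt (fun x => Real.log (u x)) (p * Real.exp x / u x) x :=
      (hu' x).log (hu x).ne'
    exact (h1.add h2).sub h3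
  have hG' : ∀ x, HasDerivAt G (1 / 4 - p * Real.exp x * (1 - p) / (u x) ^ 2) x := by
    intro x
    have h1 : HasDerivAt (fun x : ℝ => p + x / 4) (1 / 4) x := by
      simpa using ((hasDerivAt_id x).div_const 4).const_add p
    have h2 : HasDerivAt (fun x => p * Real.exp x) (p * Real.exp x) x :=
      (Real.hasDerivAt_exp x).const_mul p
    have h3 := h2.div (hu' x) (hu x).ne'
    have h4 := h1.sub h3
    refine h4.congr_deriv ?_
    have : u x = 1 - p + p * Real.exp x := rfl
    rw [this]
    ring
  have hGmono : Monotone G := by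
    refine monotone_of_deriv_nonneg (fun x => (hG' x).differentiableAt) ?_
    intro x
    rw [(hG' x).deriv]
    have h2 : (0:ℝ) < (u x) ^ 2 := pow_pos (hu x) 2
    have key : p * Real.exp x * (1 - p) / (u x) ^ 2 ≤ 1 / 4 := by
      rw [div_le_iff₀ h2]
      have : u x = 1 - p + p * Real.exp x := rfl
      nlinarith [sq_nonneg ((1 - p) - p * Real.exp x)]
    linarith
  have hG0 : G 0 = 0 := by
    simp [hG_def, hu_def]
  have hF0 : F 0 = 0 := by
    simp [hF_def, hu_def]
  have hFdiff : Differentiable ℝ F := fun x => (hF' x).differentiableAt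
  have hFnonneg : ∀ x, 0 ≤ F x := by
    intro x
    rcases le_total 0 x with hx | hx
    · have hmono : MonotoneOn F (Set.Ici 0) := by
        refine monotoneOn_of_deriv_nonneg (convex_Ici 0) hFdiff.continuous.continuousOn
          hFdiff.differentiableOn ?_
        intro y hy
        rw [interior_Ici] at hy
        rw [(hF' y).deriv]
        rw [← hG0]
        exact hGmono (le_of_lt hy)
      have := hmono (Set.self_mem_Ici) hx hx
      rwa [hF0] at this
    · have hanti : AntitoneOn F (Set.Iic 0) := by
        refine antitoneOn_of_deriv_nonpos (convex_Iic 0) hFdiff.continuous.continuousOn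
          hFdiff.differentiableOn ?_
        intro y hy
        rw [interior_Iic] at hy
        rw [(hF' y).deriv]
        rw [← hG0]
        exact hGmono (le_of_lt hy)
      have := hanti hx (Set.self_mem_Iic) hx
      rwa [hF0] at this
  have := hFnonneg y
  have hlog : Real.log (u y) ≤ y * p + y ^ 2 / 8 := by
    simp only [hF_def] at this; linarith
  exact (Real.log_le_iff_le_exp (hu y)).mp hlog
/-- Chernoff bound on the sum of binomial upper-tail terms. -/
lemma binom_tail_le {m k : ℕ} (p : ℝ) (hp0 : 0 ≤ p) (hp1 : p ≤ 1) (l : ℝ) (hl : 0 ≤ l) :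
    ∑ I ∈ (Finset.univ.powerset.filter (fun I : Finset (Fin m) => k ≤ I.card)),
        p ^ I.card * (1 - p) ^ (m - I.card)
      ≤ Real.exp ((m : ℝ) * (l * p + l ^ 2 / 8) - l * k) := by
  have hq0 : (0:ℝ) ≤ 1 - p := by linarith
  have step1 : ∀ I ∈ (Finset.univ.powerset.filter (fun I : Finset (Fin m) => k ≤ I.card)),
      p ^ I.card * (1 - p) ^ (m - I.card)
        ≤ Real.exp (- (l * k)) * ((p * Real.exp l) ^ I.card * (1 - p) ^ (m - I.card)) := by
    intro I hI
    have hk : k ≤ I.card := (Finset.mem_filter.mp hI).2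
    have h1 : (1:ℝ) ≤ Real.exp (l * I.card - l * k) := by
      apply Real.one_le_exp
      have : (k:ℝ) ≤ I.card := by exact_mod_cast hk
      nlinarith
    calc p ^ I.card * (1 - p) ^ (m - I.card)
        ≤ Real.exp (l * I.card - l * k) * (p ^ I.card * (1 - p) ^ (m - I.card)) := by
          nlinarith [mul_nonneg (pow_nonneg hp0 I.card) (pow_nonneg hq0 (m - I.card)),
            mul_nonneg (pow_nonneg hp0 I.card) (pow_nonneg hq0 (m - I.card))]
      _ = Real.exp (- (l * k)) * ((p * Real.exp l) ^ I.card * (1 - p) ^ (m - I.card)) := by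
          rw [mul_pow, ← Real.exp_nat_mul]
          rw [show l * (I.card:ℝ) - l * k = -(l*k) + (I.card:ℝ) * l by ring, Real.exp_add]
          ring
  calc ∑ I ∈ (Finset.univ.powerset.filter (fun I : Finset (Fin m) => k ≤ I.card)),
        p ^ I.card * (1 - p) ^ (m - I.card)
      ≤ ∑ I ∈ (Finset.univ.powerset.filter (fun I : Finset (Fin m) => k ≤ I.card)),
          Real.exp (- (l * k)) * ((p * Real.exp l) ^ I.card * (1 - p) ^ (m - I.card)) :=
        Finset.sum_le_sum step1
    _ ≤ ∑ I ∈ (Finset.univ.powerset : Finset (Finset (Fin m))),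
          Real.exp (- (l * k)) * ((p * Real.exp l) ^ I.card * (1 - p) ^ (m - I.card)) := by
        apply Finset.sum_le_sum_of_subset_of_nonneg (Finset.filter_subset _ _)
        intro I _ _
        positivity
    _ = Real.exp (- (l * k)) * ∑ I ∈ (Finset.univ.powerset : Finset (Finset (Fin m))),
          ((p * Real.exp l) ^ I.card * (1 - p) ^ (m - I.card)) := by
        rw [Finset.mul_sum]
    _ = Real.exp (- (l * k)) * (p * Real.exp l + (1 - p)) ^ m := by
        congr 1
        have := Finset.prod_add (fun _ : Fin m => p * Real.exp l) (fun _ : Fin m => 1 - p)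
          Finset.univ
        simp only [Finset.prod_const] at this
        rw [Finset.card_univ, Fintype.card_fin] at this
        rw [this]
        apply Finset.sum_congr rfl
        intro I hI
        rw [Finset.mem_powerset] at hI
        rw [Finset.card_sdiff_of_subset hI]
        simp [Finset.card_univ]
    _ ≤ Real.exp (- (l * k)) * (Real.exp (l * p + l ^ 2 / 8)) ^ m := by
        apply mul_le_mul_of_nonneg_left _ (Real.exp_pos _).le
        apply pow_le_pow_left₀ (by positivity)
        linarith [bernoulli_mgf_le hp0 hp1 l]
    _ = Real.exp ((m : ℝ) * (l * p + l ^ 2 / 8) - l * k) := by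
        rw [← Real.exp_nat_mul, ← Real.exp_add]
        ring_nf

lemma kth_lt_count {m k : ℕ} (v : Fin m → ℝ) (t : ℝ) (hk1 : 1 ≤ k) (hkm : k ≤ m)
    (h : kthSmallest (List.ofFn v) k < t) :
    k ≤ (Finset.univ.filter (fun i => v i < t)).card := by
  classical
  set l : List ℝ := List.ofFn v with hl
  set srt : List ℝ := (Multiset.ofList l).sort (· ≤ ·) with hsrt
  have hlen : srt.length = m := by
    simp [hsrt, hl, Multiset.length_sort]
  have hsorted : srt.Pairwise (· ≤ ·) := Multiset.pairwise_sort _ _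
  have hk1m : k - 1 < srt.length := by omega
  have hget : srt.getD (k - 1) 0 = srt.get ⟨k - 1, hk1m⟩ := List.getD_eq_get _ _ ⟨k - 1, hk1m⟩
  have hkth : srt.get ⟨k - 1, hk1m⟩ < t := by
    rw [← hget]; exact h
  -- all of take k are < t
  have htake : ∀ x ∈ srt.take k, x < t := by
    intro x hx
    rw [List.mem_take_iff_getElem] at hx
    obtain ⟨j, hj, rfl⟩ := hx
    have hjk : j < k := by simp at hj; omega
    have hjlen : j < srt.length := by omega
    have : srt.get ⟨j, hjlen⟩ ≤ srt.get ⟨k - 1, hk1m⟩ :=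
      hsorted.rel_get_of_le (by simp; omega)
    calc srt[j] = srt.get ⟨j, hjlen⟩ := rfl
      _ ≤ srt.get ⟨k - 1, hk1m⟩ := this
      _ < t := hkth
  have hcount_take : (srt.take k).countP (fun x => decide (x < t)) = k := by
    have hall : ∀ x ∈ srt.take k, (fun x => decide (x < t)) x = true := by
      intro x hx; simpa using htake x hx
    rw [List.countP_eq_length.mpr hall, List.length_take, hlen]
    omega
  have hcount_srt : k ≤ srt.countP (fun x => decide (x < t)) := by
    conv_rhs => rw [← List.take_append_drop k srt]
    rw [List.countP_append, hcount_take]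
    omega
  -- transfer to the list l
  have hperm : srt.Perm l := by
    have := Multiset.sort_eq (Multiset.ofList l) (· ≤ ·)
    exact Quotient.exact this
  have hcount_l : k ≤ l.countP (fun x => decide (x < t)) := by
    rwa [hperm.countP_eq] at hcount_srt
  -- transfer to the Finset count
  have hcard : (Finset.univ.filter (fun i => v i < t)).card
      = (List.finRange m).countP (fun i => decide (v i < t)) := by
    rw [Finset.card_def, Finset.filter_val, Fin.univ_def]
    show ((List.finRange m : Multiset (Fin m)).filter _).card = _
    rw [← Multiset.countP_eq_card_filter, Multiset.coe_countP]
  have hl_count : l.countP (fun x => decide (x < t))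
      = (List.finRange m).countP (fun i => decide (v i < t)) := by
    rw [hl, List.ofFn_eq_map, List.countP_map]
    rfl
  omega

end Aux

set_option maxHeartbeats 1000000 in
/-- **Main theorem.** `SensitivitySampler` composed with any sensitivity-induced
`(ε,δ)`-differentially private mechanism preserves `(ε,δ,γ)`-random differential privacy,
provided `m ≥ log(1/ρ)/(2(γ−ρ)²)` and `m ≥ k ≥ m(1 − γ + ρ + √(log(1/ρ)/(2m)))`. -/
theorem sample_then_respond_rdp
    {𝒟 : Type*} [MeasurableSpace 𝒟] (P : Measure 𝒟) [IsProbabilityMeasure P]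
    {B : Type*} [NormedAddCommGroup B] [NormedSpace ℝ B]
    {ℛ : Type*} [MeasurableSpace ℛ]
    (n : ℕ) (f : (Fin n → 𝒟) → B)
    (g : (Fin (n + 1) → 𝒟) → ℝ)
    (hgdef : g = fun w =>
      ‖f (fun i : Fin n => w i.castSucc) -
        f (fun i : Fin n =>
            if (i : ℕ) = n - 1 then w (Fin.last n) else w i.castSucc)‖)
    (hg : Measurable g)
    (ε δ γ ρ : ℝ) (hε : 0 < ε) (hδ0 : 0 ≤ δ) (hδ1 : δ ≤ 1)
    (hγ0 : 0 < γ) (hγ1 : γ < 1) (hρ0 : 0 < ρ) (hργ : ρ < γ) (hρhalf : ρ < 1/2)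
    (m k : ℕ)
    (hm : Real.log (1/ρ) / (2 * (γ - ρ)^2) ≤ (m : ℝ))
    (hkm : k ≤ m)
    (hk : (m : ℝ) * (1 - γ + ρ + Real.sqrt (Real.log (1/ρ) / (2 * m))) ≤ (k : ℝ))
    (M : ℝ → B → Measure ℛ)
    (hMprob : ∀ Δ : ℝ, 0 ≤ Δ → ∀ x : B, IsProbabilityMeasure (M Δ x))
    -- sensitivity-induced (ε,δ)-differential privacy of the mechanism `M`:
    (hMdp : ∀ Δ : ℝ, 0 ≤ Δ → ∀ x x' : B, ‖x - x'‖ ≤ Δ →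
      ∀ R : Set ℛ, MeasurableSet R →
        M Δ x R ≤ ENNReal.ofReal (Real.exp ε) * M Δ x' R + ENNReal.ofReal δ)
    -- the sampled sensitivity: the k-th order statistic of the sampled sensitivities
    (Δhat : (Fin m → Fin (n + 1) → 𝒟) → ℝ)
    (hΔhat : Δhat = fun s => kthSmallest (List.ofFn fun i : Fin m => g (s i)) k)
    -- the event that the (ε,δ)-DP inequality holds on the induced neighbouring pair,
    -- when the mechanism is run with the sampled sensitivity:
    (A : Set ((Fin (n + 1) → 𝒟) × (Fin m → Fin (n + 1) → 𝒟)))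
    (hAdef : A = {ws |
      ∀ R : Set ℛ, MeasurableSet R →
        M (Δhat ws.2) (f (fun i : Fin n => ws.1 i.castSucc)) R ≤
          ENNReal.ofReal (Real.exp ε) *
            M (Δhat ws.2)
              (f (fun i : Fin n =>
                if (i : ℕ) = n - 1 then ws.1 (Fin.last n) else ws.1 i.castSucc)) R +
          ENNReal.ofReal δ})
    (hA : MeasurableSet A) :
    1 - γ ≤
      (((Measure.pi fun _ : Fin (n + 1) => P).prod
          (Measure.pi fun _ : Fin m => Measure.pi fun _ : Fin (n + 1) => P)) A).toReal := by
  classical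
  set μ : Measure (Fin (n + 1) → 𝒟) := Measure.pi fun _ => P with hμdef
  set ν : Measure (Fin m → Fin (n + 1) → 𝒟) := Measure.pi fun _ => μ with hνdef
  -- basic numeric facts
  have hρ1 : ρ < 1 := by linarith
  have hL : 0 < Real.log (1/ρ) := Real.log_pos ((one_lt_div hρ0).mpr (by linarith))
  have hm0 : 0 < (m : ℝ) := by
    have h2 : 0 < Real.log (1/ρ) / (2 * (γ - ρ)^2) := div_pos hL (by nlinarith)
    linarith
  set sq : ℝ := Real.sqrt (Real.log (1/ρ) / (2 * m)) with hsqdef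
  have hsq0 : 0 < sq := Real.sqrt_pos.mpr (by positivity)
  set c : ℝ := 1 - γ + ρ with hcdef
  have hc0 : 0 < c := by simp only [hcdef]; linarith
  have hc1 : c < 1 := by simp only [hcdef]; linarith
  have hk1 : 1 ≤ k := by
    have h1 : 0 < (m:ℝ) * (c + sq) := mul_pos hm0 (by linarith)
    have h2 : (0:ℝ) < k := by
      refine lt_of_lt_of_le h1 ?_
      simpa [hcdef, hsqdef] using hk
    exact_mod_cast Nat.one_le_iff_ne_zero.mpr (by exact_mod_cast h2.ne')
  have hgnonneg : ∀ w, 0 ≤ g w := by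
    intro w; rw [hgdef]; exact norm_nonneg _
  -- the quantile
  set S : Set ℝ := {t | ENNReal.ofReal c ≤ μ {w | g w ≤ t}} with hSdef
  have hc_lt_one : ENNReal.ofReal c < 1 := by
    rw [show (1:ℝ≥0∞) = ENNReal.ofReal 1 by simp]
    exact ENNReal.ofReal_lt_ofReal_iff_of_nonneg hc0.le |>.mpr hc1
  have hSne : S.Nonempty := by
    have hmono : Monotone (fun j : ℕ => {w | g w ≤ (j : ℝ)}) := by
      intro a b hab w hw
      simp only [Set.mem_setOf_eq] at hw ⊢
      exact le_trans hw (by exact_mod_cast hab)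
    have hU : ⋃ j : ℕ, {w | g w ≤ (j : ℝ)} = Set.univ := by
      ext w; simp only [Set.mem_iUnion, Set.mem_univ, iff_true, Set.mem_setOf_eq]
      exact exists_nat_ge (g w)
    have htend := tendsto_measure_iUnion_atTop (μ := μ) hmono
    rw [hU, measure_univ] at htend
    have hev : ∀ᶠ j : ℕ in Filter.atTop, ENNReal.ofReal c < μ {w | g w ≤ (j : ℝ)} :=
      htend.eventually (eventually_gt_nhds hc_lt_one)
    obtain ⟨j, hj⟩ := hev.exists
    exact ⟨j, hj.le⟩
  have hSlb : ∀ t ∈ S, (0:ℝ) ≤ t := by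
    intro t ht
    by_contra hneg
    push_neg at hneg
    have hempty : {w | g w ≤ t} = ∅ := by
      ext w; simp only [Set.mem_setOf_eq, Set.mem_empty_iff_false, iff_false, not_le]
      exact lt_of_lt_of_le hneg (hgnonneg w)
    rw [hSdef] at ht
    simp only [Set.mem_setOf_eq, hempty, measure_empty, nonpos_iff_eq_zero,
      ENNReal.ofReal_eq_zero] at ht
    linarith
  have hSbdd : BddBelow S := ⟨0, hSlb⟩
  set t₀ : ℝ := sInf S with ht₀def
  have ht₀0 : 0 ≤ t₀ := le_csInf hSne hSlb
  -- CDF at t₀ from the right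
  have hW : ENNReal.ofReal c ≤ μ {w | g w ≤ t₀} := by
    have hInter : {w | g w ≤ t₀} = ⋂ j : ℕ, {w | g w ≤ t₀ + 1/(j+1)} := by
      ext w
      simp only [Set.mem_setOf_eq, Set.mem_iInter]
      constructor
      · intro hw j
        have : (0:ℝ) < 1/(j+1) := by positivity
        linarith
      · intro hw
        by_contra hlt
        push_neg at hlt
        obtain ⟨j, hj⟩ := exists_nat_one_div_lt (show (0:ℝ) < g w - t₀ by linarith)
        have := hw j
        linarith
    have heach : ∀ j : ℕ, ENNReal.ofReal c ≤ μ {w | g w ≤ t₀ + 1/(j+1)} := by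
      intro j
      have hpos : (0:ℝ) < 1/(j+1) := by positivity
      obtain ⟨t, htS, htlt⟩ := (csInf_lt_iff hSbdd hSne).mp
        (show sInf S < t₀ + 1/(j+1) by rw [← ht₀def]; linarith)
      refine le_trans htS (measure_mono ?_)
      intro w hw
      exact le_trans hw htlt.le
    have hanti : Antitone (fun j : ℕ => {w | g w ≤ t₀ + 1/(j+1)}) := by
      intro a b hab w hw
      simp only [Set.mem_setOf_eq] at hw ⊢
      have : 1/((b:ℝ)+1) ≤ 1/((a:ℝ)+1) := by
        apply one_div_le_one_div_of_le (by positivity)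
        exact_mod_cast by omega
      exact le_trans hw (by linarith)
    have htend := tendsto_measure_iInter_atTop (μ := μ)
      (fun j => ((hg measurableSet_Iic).nullMeasurableSet))
      hanti ⟨0, measure_ne_top μ _⟩
    rw [hInter]
    exact ge_of_tendsto htend (Filter.Eventually.of_forall heach)
  -- CDF strictly below t₀
  have hT : μ {w | g w < t₀} ≤ ENNReal.ofReal c := by
    have hUnion : {w | g w < t₀} = ⋃ j : ℕ, {w | g w ≤ t₀ - 1/(j+1)} := by
      ext w
      simp only [Set.mem_setOf_eq, Set.mem_iUnion]
      constructor
      · intro hw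
        obtain ⟨j, hj⟩ := exists_nat_one_div_lt (show (0:ℝ) < t₀ - g w by linarith)
        exact ⟨j, by linarith⟩
      · rintro ⟨j, hj⟩
        have : (0:ℝ) < 1/(j+1) := by positivity
        linarith
    have hmono : Monotone (fun j : ℕ => {w | g w ≤ t₀ - 1/(j+1)}) := by
      intro a b hab w hw
      simp only [Set.mem_setOf_eq] at hw ⊢
      have : 1/((b:ℝ)+1) ≤ 1/((a:ℝ)+1) := by
        apply one_div_le_one_div_of_le (by positivity)
        exact_mod_cast by omega
      exact le_trans hw (by linarith)
    rw [hUnion, hmono.measure_iUnion]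
    refine iSup_le fun j => ?_
    by_contra hgt
    push_neg at hgt
    have htS : (t₀ - 1/(j+1)) ∈ S := hgt.le
    have := csInf_le hSbdd htS
    have hpos : (0:ℝ) < 1/(j+1) := by positivity
    rw [← ht₀def] at this
    linarith
  -- the probability p of low sensitivity
  set T : Set (Fin (n+1) → 𝒟) := {w | g w < t₀} with hTdef
  have hTmeas : MeasurableSet T := hg measurableSet_Iio
  set pr : ℝ := (μ T).toReal with hprdef
  have hμT_ne_top : μ T ≠ ⊤ := measure_ne_top μ T
  have hpr0 : 0 ≤ pr := ENNReal.toReal_nonneg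
  have hprc : pr ≤ c := by
    have := ENNReal.toReal_mono ENNReal.ofReal_ne_top hT
    rwa [ENNReal.toReal_ofReal hc0.le] at this
  have hpr1 : pr ≤ 1 := le_trans hprc hc1.le
  have hμT_eq : μ T = ENNReal.ofReal pr := (ENNReal.ofReal_toReal hμT_ne_top).symm
  have hμTc_eq : μ Tᶜ = ENNReal.ofReal (1 - pr) := by
    rw [prob_compl_eq_one_sub hTmeas, hμT_eq,
      show (1:ℝ≥0∞) = ENNReal.ofReal 1 by simp, ← ENNReal.ofReal_sub _ hpr0]
  -- the count of low-sensitivity samples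
  set cnt : (Fin m → Fin (n+1) → 𝒟) → ℕ :=
    fun s => (Finset.univ.filter (fun i => g (s i) < t₀)).card with hcntdef
  have hcnt_meas : Measurable cnt := by
    have : cnt = fun s => ∑ i : Fin m, if g (s i) < t₀ then 1 else 0 := by
      funext s
      rw [hcntdef]
      exact Finset.card_filter _ _
    rw [this]
    refine Finset.measurable_sum _ (fun i _ => ?_)
    refine Measurable.ite ?_ measurable_const measurable_const
    exact measurableSet_lt (hg.comp (measurable_pi_apply i)) measurable_const
  set Bad : Set (Fin m → Fin (n+1) → 𝒟) := {s | k ≤ cnt s} with hBaddef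
  have hBadMeas : MeasurableSet Bad := hcnt_meas (measurableSet_Ici (a := k))
  -- Bad is covered by pattern events
  set F : Finset (Finset (Fin m)) :=
    Finset.univ.powerset.filter (fun I : Finset (Fin m) => k ≤ I.card) with hFdef
  have hBadsub : Bad ⊆ ⋃ I ∈ F, Set.pi Set.univ (fun i => if i ∈ I then T else Tᶜ) := by
    intro s hs
    rw [Set.mem_iUnion]
    refine ⟨Finset.univ.filter (fun i => g (s i) < t₀), ?_⟩
    rw [Set.mem_iUnion]
    refine ⟨?_, ?_⟩
    · rw [hFdef, Finset.mem_filter]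
      exact ⟨Finset.mem_powerset.mpr (Finset.subset_univ _), hs⟩
    · intro i _
      by_cases hi : g (s i) < t₀
      · simp only [Finset.mem_filter, Finset.mem_univ, true_and, hi, if_true]
        exact hi
      · simp only [Finset.mem_filter, Finset.mem_univ, true_and, hi, if_false]
        exact hi
  have hνE : ∀ I : Finset (Fin m),
      ν (Set.pi Set.univ (fun i => if i ∈ I then T else Tᶜ))
        = ENNReal.ofReal (pr ^ I.card * (1 - pr) ^ (m - I.card)) := by
    intro I
    rw [hνdef, Measure.pi_pi]
    have : ∀ i : Fin m, μ (if i ∈ I then T else Tᶜ) = if i ∈ I then μ T else μ Tᶜ := by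
      intro i; split <;> rfl
    rw [Finset.prod_congr rfl (fun i _ => this i)]
    rw [← Finset.prod_sdiff (Finset.subset_univ I)]
    rw [Finset.prod_ite_of_false (fun i hi => (Finset.mem_sdiff.mp hi).2),
      Finset.prod_ite_of_true (fun i hi => hi)]
    rw [Finset.prod_const, Finset.prod_const, Finset.card_sdiff_of_subset (Finset.subset_univ I),
      Finset.card_univ, Fintype.card_fin]
    rw [hμT_eq, hμTc_eq, ← ENNReal.ofReal_pow hpr0, ← ENNReal.ofReal_pow (show (0:ℝ) ≤ 1 - pr by linarith),
      ← ENNReal.ofReal_mul (pow_nonneg (show (0:ℝ) ≤ 1 - pr by linarith) _)]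
    congr 1
    ring
  -- Chernoff–Hoeffding bound on Bad
  have hνBad : ν Bad ≤ ENNReal.ofReal ρ := by
    calc ν Bad ≤ ν (⋃ I ∈ F, Set.pi Set.univ (fun i => if i ∈ I then T else Tᶜ)) :=
          measure_mono hBadsub
      _ ≤ ∑ I ∈ F, ν (Set.pi Set.univ (fun i => if i ∈ I then T else Tᶜ)) :=
          measure_biUnion_finset_le _ _
      _ = ∑ I ∈ F, ENNReal.ofReal (pr ^ I.card * (1 - pr) ^ (m - I.card)) :=
          Finset.sum_congr rfl (fun I _ => hνE I)
      _ = ENNReal.ofReal (∑ I ∈ F, pr ^ I.card * (1 - pr) ^ (m - I.card)) :=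
          (ENNReal.ofReal_sum_of_nonneg
            (fun I _ => mul_nonneg (pow_nonneg hpr0 _) (pow_nonneg (by linarith) _))).symm
      _ ≤ ENNReal.ofReal ρ := by
          apply ENNReal.ofReal_le_ofReal
          set lam : ℝ := 4 * ((k:ℝ)/m - pr) with hlamdef
          have htt : sq ≤ (k:ℝ)/m - pr := by
            have h1 : (m:ℝ) * (c + sq) ≤ k := by simpa [hcdef, hsqdef] using hk
            have h2 : (m:ℝ) * (sq + pr) ≤ k := by nlinarith
            have h3 : sq + pr ≤ (k:ℝ)/m := (le_div_iff₀ hm0).mpr (by nlinarith)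
            linarith
          have hlam0 : 0 ≤ lam := by rw [hlamdef]; nlinarith
          refine le_trans (binom_tail_le pr hpr0 hpr1 lam hlam0) ?_
          rw [show ρ = Real.exp (Real.log ρ) from (Real.exp_log hρ0).symm]
          apply Real.exp_le_exp.mpr
          have hsq_sq : sq ^ 2 = Real.log (1/ρ) / (2 * m) := Real.sq_sqrt (by positivity)
          have hlogρ : Real.log ρ = - Real.log (1/ρ) := by
            rw [one_div, Real.log_inv]; ring
          have hkey : (m:ℝ) * ((k:ℝ)/m - pr) = k - m * pr := by field_simp
          have htt2 : sq ^ 2 ≤ ((k:ℝ)/m - pr) ^ 2 := by nlinarith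
          rw [hlogρ]
          have expand : (m:ℝ) * (lam * pr + lam ^ 2 / 8) - lam * k
              = - (2 * m * ((k:ℝ)/m - pr) ^ 2) := by
            rw [hlamdef]
            field_simp
            ring
          rw [expand]
          have : Real.log (1/ρ) = 2 * m * (Real.log (1/ρ) / (2*m)) := by field_simp
          nlinarith [htt2, hsq_sq]
  -- the good events
  set W : Set (Fin (n+1) → 𝒟) := {w | g w ≤ t₀} with hWdef
  have hνGood : ENNReal.ofReal (1 - ρ) ≤ ν Badᶜ := by
    rw [prob_compl_eq_one_sub hBadMeas]
    calc ENNReal.ofReal (1 - ρ) = ENNReal.ofReal 1 - ENNReal.ofReal ρ :=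
          ENNReal.ofReal_sub 1 hρ0.le
      _ = 1 - ENNReal.ofReal ρ := by simp
      _ ≤ 1 - ν Bad := tsub_le_tsub_left hνBad 1
  -- inclusion into A
  have hsub : W ×ˢ Badᶜ ⊆ A := by
    rintro ⟨w, s⟩ ⟨hw, hs⟩
    rw [hAdef]
    intro R hR
    have hΔ : t₀ ≤ Δhat s := by
      by_contra hlt
      push_neg at hlt
      rw [hΔhat] at hlt
      have hcount := kth_lt_count (fun i => g (s i)) t₀ hk1 hkm hlt
      exact hs hcount
    have h0 : 0 ≤ Δhat s := le_trans ht₀0 hΔ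
    refine hMdp _ h0 _ _ ?_ R hR
    have hgw : g w ≤ t₀ := hw
    rw [hgdef] at hgw
    exact le_trans hgw hΔ
  -- put it together
  have hprod : ENNReal.ofReal (c * (1 - ρ)) ≤ (μ.prod ν) A := by
    calc ENNReal.ofReal (c * (1 - ρ)) = ENNReal.ofReal c * ENNReal.ofReal (1 - ρ) :=
          ENNReal.ofReal_mul hc0.le
      _ ≤ μ W * ν Badᶜ := mul_le_mul' hW hνGood
      _ = (μ.prod ν) (W ×ˢ Badᶜ) := (Measure.prod_prod _ _).symm
      _ ≤ (μ.prod ν) A := measure_mono hsub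
  have hfinal := ENNReal.toReal_mono (measure_ne_top _ A) hprod
  rw [ENNReal.toReal_ofReal (mul_nonneg hc0.le (by linarith))] at hfinal
  refine le_trans ?_ hfinal
  nlinarith
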